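/- If a finite ground normal logic program P is locally stratified (every cycle of its dependency graph contains no negative arc), then P has a unique regular model, and this regular model is 2-valued (it is the unique stable model of P). -/

import Mathlib

/-- Three truth values: false, unknown, true. -/
inductive TV3 | fls | unk | tru
  deriving DecidableEq

namespace TV3

def toFin : TV3 → Fin 3
  | fls => 0 | unk => 1 | tru => 2

/-- The truth order f < u < t. -/
instance : LinearOrder TV3 :=
  LinearOrder.lift' toFin (by intro a b h; cases a <;> cases b <;> simp_all [toFin])

instance : BoundedOrder TV3 where
  top := tru
  bot := fls
  le_top x := by cases x <;> decide
  bot_le x := by cases x <;> decide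

/-- Kleene negation. -/
def neg : TV3 → TV3 | fls => tru | unk => unk | tru => fls

end TV3

def ofBool : Bool → TV3 | true => .tru | false => .fls

/-- The subset order on truth values: f <ₛ u and t <ₛ u. -/
def leS (x y : TV3) : Prop := x = y ∨ y = TV3.unk

section LP

variable {A : Type*} [Fintype A] [DecidableEq A]

/-- Pointwise subset order on 3-valued interpretations. -/
def leSI (I₁ I₂ : A → TV3) : Prop := ∀ a, leS (I₁ a) (I₂ a)

/-- The set of 2-valued interpretations compatible with a 3-valued one. -/
def gamma (I : A → TV3) : Set (A → Bool) :=
  {J | ∀ a, I a ≠ TV3.unk → ofBool (J a) = I a}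

/-- A ground normal rule: head ← pos, ∼neg. -/
structure Rule (A : Type*) where
  head : A
  pos : Finset A
  neg : Finset A
  deriving DecidableEq

/-- A finite ground normal logic program. -/
abbrev Program (A : Type*) [DecidableEq A] := Finset (Rule A)

/-- Immediate consequence operator T_P. -/
def TP (P : Program A) (J : A → Bool) (a : A) : Bool :=
  decide (∃ r ∈ P, r.head = a ∧ (∀ p ∈ r.pos, J p = true) ∧ (∀ q ∈ r.neg, J q = false))

/-- 2-valued value of the body formula of a rule. -/
noncomputable def bodyVal2 (r : Rule A) (s : A → Bool) : Bool :=
  (r.pos.inf s) && !(r.neg.sup s)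

/-- The Boolean network encoding of a program: f_v = ⋁_{head r = v} body-formula(r). -/
noncomputable def encBN (P : Program A) : A → (A → Bool) → Bool :=
  fun v s => P.sup fun r => if r.head = v then bodyVal2 r s else false

/-- 3-valued (Kleene) value of the body formula of a rule. -/
def bodyVal3 (r : Rule A) (I : A → TV3) : TV3 :=
  (r.pos.inf I) ⊓ (r.neg.inf fun q => TV3.neg (I q))

/-- 3-valued evaluation of rhs(a), the disjunction of bodies of rules with head a. -/
def rhs3 (P : Program A) (I : A → TV3) (a : A) : TV3 :=
  P.sup fun r => if r.head = a then bodyVal3 r I else TV3.fls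

/-- Signs of arcs. -/
inductive Sign | pos | neg
  deriving DecidableEq

/-- A signed directed graph on A. -/
abbrev SGraph (A : Type*) := A → A → Sign → Prop

def posArc (P : Program A) (u v : A) : Prop := ∃ r ∈ P, r.head = v ∧ u ∈ r.pos
def negArc (P : Program A) (u v : A) : Prop := ∃ r ∈ P, r.head = v ∧ u ∈ r.neg

/-- Dependency graph of a program. -/
def dg (P : Program A) : SGraph A := fun u v s =>
  match s with
  | Sign.pos => posArc P u v
  | Sign.neg => negArc P u v

/-- Influence graph of a Boolean network. -/
def ig (f : A → (A → Bool) → Bool) : SGraph A := fun u v s =>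
  match s with
  | Sign.pos => ∃ x : A → Bool, f v (Function.update x u false) < f v (Function.update x u true)
  | Sign.neg => ∃ x : A → Bool, f v (Function.update x u true) < f v (Function.update x u false)

/-- A (closed signed) cycle in a signed graph: vertices v₀,…,vₙ with arcs
vᵢ → vᵢ₊₁ (indices mod n+1) carrying the given signs. -/
structure SCycle (G : SGraph A) where
  n : ℕ
  vtx : Fin (n + 1) → A
  sgn : Fin (n + 1) → Sign
  arc : ∀ i, G (vtx i) (vtx (i + 1)) (sgn i)

/-- A cycle is negative if it has an odd number of negative arcs. -/
def SCycle.IsNeg {G : SGraph A} (c : SCycle G) : Prop :=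
  (Finset.univ.filter fun i => c.sgn i = Sign.neg).card % 2 = 1

/-- A cycle is positive if it has an even number of negative arcs. -/
def SCycle.IsPos {G : SGraph A} (c : SCycle G) : Prop :=
  (Finset.univ.filter fun i => c.sgn i = Sign.neg).card % 2 = 0

/-- U is a positive feedback vertex set: it meets every positive cycle. -/
def IsPFVS (G : SGraph A) (U : Finset A) : Prop :=
  ∀ c : SCycle G, c.IsPos → ∃ i, c.vtx i ∈ U

/-- P is tight: its positive dependency graph is acyclic. -/
def Tight (P : Program A) : Prop :=
  IsEmpty (SCycle (fun u v s => s = Sign.pos ∧ posArc P u v))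

/-- Synchronous update of a Boolean network. -/
def syncNext (f : A → (A → Bool) → Bool) (x : A → Bool) : A → Bool := fun v => f v x

/-- Fully asynchronous transition. -/
def asyncStep (f : A → (A → Bool) → Bool) (x y : A → Bool) : Prop :=
  ∃ v, f v x ≠ x v ∧ y = Function.update x v (f v x)

/-- Nonempty trap set of the asynchronous state transition graph. -/
def IsTrapSet (f : A → (A → Bool) → Bool) (S : Set (A → Bool)) : Prop :=
  S.Nonempty ∧ ∀ x ∈ S, ∀ y, asyncStep f x y → y ∈ S

/-- Attractor: subset-minimal nonempty trap set. -/
def IsAttractor (f : A → (A → Bool) → Bool) (S : Set (A → Bool)) : Prop :=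
  IsTrapSet f S ∧ ∀ T, IsTrapSet f T → T ⊆ S → T = S

def IsFixedPoint (f : A → (A → Bool) → Bool) (x : A → Bool) : Prop :=
  syncNext f x = x

/-- Trap space of a BN under synchronous update. -/
def IsSyncTrapSpace (f : A → (A → Bool) → Bool) (m : A → TV3) : Prop :=
  ∀ s ∈ gamma m, syncNext f s ∈ gamma m

/-- Trap space of a BN under asynchronous update. -/
def IsAsyncTrapSpace (f : A → (A → Bool) → Bool) (m : A → TV3) : Prop :=
  ∀ s ∈ gamma m, ∀ y, asyncStep f s y → y ∈ gamma m

/-- Supported trap space: γ(I) is closed under T_P. -/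
def IsSuppTrapSpace (P : Program A) (I : A → TV3) : Prop :=
  ∀ J ∈ gamma I, TP P J ∈ gamma I

/-- Supported partial model: 3-valued model of Clark's completion. -/
def IsSuppPartialModel (P : Program A) (I : A → TV3) : Prop :=
  ∀ a, I a = rhs3 P I a

/-- The 3-valued one-step operator of the Przymusinski reduct P^I applied to K:
negative literals are evaluated under I (Kleene negation), positive ones under K. -/
def Phi (P : Program A) (I K : A → TV3) (a : A) : TV3 :=
  P.sup fun r =>
    if r.head = a then (r.pos.inf K) ⊓ (r.neg.inf fun q => TV3.neg (I q)) else TV3.fls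

/-- Stable partial model: I is the ≤ₜ-least 3-valued model of the reduct P^I. -/
def IsStablePartial (P : Program A) (I : A → TV3) : Prop :=
  (∀ a, Phi P I I a ≤ I a) ∧
    ∀ K : A → TV3, (∀ a, Phi P I K a ≤ K a) → ∀ a, I a ≤ K a

/-- Regular model: ≤ₛ-minimal stable partial model. -/
def IsRegularModel (P : Program A) (I : A → TV3) : Prop :=
  IsStablePartial P I ∧ ∀ I', IsStablePartial P I' → leSI I' I → I' = I

def Is2Valued (I : A → TV3) : Prop := ∀ a, I a ≠ TV3.unk

/-- The one-step operator of the Gelfond–Lifschitz reduct P^J applied to K. -/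
noncomputable def PhiB (P : Program A) (J K : A → Bool) (a : A) : Bool :=
  P.sup fun r =>
    if r.head = a then ((r.pos.inf K) && !(r.neg.sup J)) else false

/-- Stable model: J is the least model of the Gelfond–Lifschitz reduct P^J. -/
def IsStableModel (P : Program A) (J : A → Bool) : Prop :=
  (∀ a, PhiB P J J a ≤ J a) ∧
    ∀ K : A → Bool, (∀ a, PhiB P J K a ≤ K a) → ∀ a, J a ≤ K a

/-- Every cycle of dg(P) contains no negative arc. -/
def LocallyStratified (P : Program A) : Prop :=
  ∀ c : SCycle (dg P), ∀ i, c.sgn i ≠ Sign.neg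

def NoNegCycle (G : SGraph A) : Prop := ∀ c : SCycle G, ¬ c.IsNeg
def NoPosCycle (G : SGraph A) : Prop := ∀ c : SCycle G, ¬ c.IsPos

end LP
section Rank
variable {A : Type*} [Fintype A] [DecidableEq A]

def pstep (P : Program A) (u v : A) : Prop := posArc P u v ∨ negArc P u v

lemma no_back {P : Program A} (h : LocallyStratified P) {x y : A}
    (hxy : negArc P x y) (hr : Relation.ReflTransGen (pstep P) y x) : False := by
  classical
  obtain ⟨l, hchain, hlast⟩ := List.exists_isChain_cons_of_relationReflTransGen hr
  have hlen : (y :: l).length = l.length + 1 := rfl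
  have hget : ∀ i (_ : i < l.length),
      pstep P ((y :: l).get ⟨i, by simp only [List.length_cons]; omega⟩) ((y :: l).get ⟨i+1, by simp only [List.length_cons]; omega⟩) := by
    intro i hi
    simpa only [List.get_eq_getElem] using hchain.getElem i (by simp only [List.length_cons]; omega)
  have hgetlast : (y :: l).get ⟨l.length, by simp⟩ = x := by
    rw [← hlast, List.getLast_eq_getElem]
    simp
  set n := l.length with hn
  let V : Fin (n+1) → A := fun i => (y :: l).get ⟨i.val, by simp only [List.length_cons]; omega⟩
  let S : Fin (n+1) → Sign := fun i =>
    if (i : ℕ) < n ∧ posArc P (V i) (V (i+1)) then Sign.pos else Sign.neg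
  have hvadd : ∀ i : Fin (n+1), (i : ℕ) < n → ((i + 1 : Fin (n+1)) : ℕ) = (i : ℕ) + 1 := by
    intro i hi
    simp [Fin.add_def, Nat.mod_eq_of_lt (by omega : (i:ℕ) + 1 < n + 1)]
  have harc : ∀ i : Fin (n+1), dg P (V i) (V (i+1)) (S i) := by
    intro i
    by_cases hi : (i : ℕ) < n
    · have hV1 : V (i+1) = (y :: l).get ⟨(i:ℕ)+1, by simp only [List.length_cons]; omega⟩ := by
        show (y :: l).get _ = _
        congr 1
        exact Fin.ext (by simpa using hvadd i hi)
      have hstep : pstep P (V i) (V (i+1)) := by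
        rw [hV1]; exact hget i hi
      by_cases hp : posArc P (V i) (V (i+1))
      · have : S i = Sign.pos := if_pos ⟨hi, hp⟩
        rw [this]; exact hp
      · have : S i = Sign.neg := if_neg (by tauto)
        rw [this]
        exact hstep.resolve_left hp
    · have hieq : (i : ℕ) = n := by omega
      have h1 : V i = x := by
        show (y :: l).get _ = x
        rw [show (⟨(i:ℕ), by simp only [List.length_cons]; omega⟩ : Fin (y::l).length) = ⟨n, by simp [hn]⟩ from Fin.ext hieq]
        exact hgetlast
      have hadd0 : ((i + 1 : Fin (n+1)) : ℕ) = 0 := by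
        simp [Fin.add_def, hieq]
      have h2 : V (i+1) = y := by
        show (y :: l).get _ = y
        rw [show (⟨((i+1 : Fin (n+1)):ℕ), by simp only [List.length_cons]; omega⟩ : Fin (y::l).length) = ⟨0, by simp⟩ from
          Fin.ext hadd0]
        rfl
      have : S i = Sign.neg := if_neg (by rintro ⟨h', _⟩; omega)
      rw [this, h1, h2]
      exact hxy
  have hS : S ⟨n, by omega⟩ = Sign.neg := if_neg (by rintro ⟨h', _⟩; exact absurd h' (by simp))
  exact h ⟨n, V, S, harc⟩ ⟨n, Nat.lt_succ_self n⟩ hS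

def negreach (P : Program A) (u v : A) : Prop :=
  ∃ x y, Relation.ReflTransGen (pstep P) u x ∧ negArc P x y ∧ Relation.ReflTransGen (pstep P) y v

lemma negreach_irrefl {P : Program A} (h : LocallyStratified P) (a : A) :
    ¬ negreach P a a := by
  rintro ⟨x, y, hax, hxy, hya⟩
  exact no_back h hxy (hya.trans hax)

open Classical in
noncomputable def rk (P : Program A) (a : A) : ℕ :=
  (Finset.univ.filter fun b => negreach P b a).card

lemma negreach_step {P : Program A} {b u v : A} (hbu : negreach P b u)
    (huv : pstep P u v) : negreach P b v := by
  obtain ⟨x, y, h1, h2, h3⟩ := hbu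
  exact ⟨x, y, h1, h2, h3.tail huv⟩

lemma rk_pos_le {P : Program A} {u v : A} (huv : posArc P u v) : rk P u ≤ rk P v := by
  classical
  apply Finset.card_le_card
  intro b hb
  simp only [rk, Finset.mem_filter, Finset.mem_univ, true_and] at hb ⊢
  exact negreach_step hb (Or.inl huv)

lemma rk_neg_lt {P : Program A} (h : LocallyStratified P) {u v : A}
    (huv : negArc P u v) : rk P u < rk P v := by
  classical
  apply Finset.card_lt_card
  constructor
  · intro b hb
    simp only [Finset.mem_filter, Finset.mem_univ, true_and] at hb ⊢
    exact negreach_step hb (Or.inr huv)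
  · intro hsub
    have hu : u ∈ Finset.univ.filter fun b => negreach P b v := by
      simp only [Finset.mem_filter, Finset.mem_univ, true_and]
      exact ⟨u, v, Relation.ReflTransGen.refl, huv, Relation.ReflTransGen.refl⟩
    have := hsub hu
    simp only [Finset.mem_filter, Finset.mem_univ, true_and] at this
    exact negreach_irrefl h u this

end Rank
section Sem
variable {A : Type*} [Fintype A] [DecidableEq A]

lemma TV3.bot_or_unk_le (x : TV3) : x = ⊥ ∨ TV3.unk ≤ x := by
  cases x
  · left; rfl
  · right; decide
  · right; decide

lemma Phi_mono {P : Program A} {I K K' : A → TV3} (h : ∀ a, K a ≤ K' a) (a : A) :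
    Phi P I K a ≤ Phi P I K' a := by
  simp only [Phi]
  refine Finset.sup_mono_fun ?_
  intro r _
  by_cases hh : r.head = a
  · rw [if_pos hh, if_pos hh]
    exact inf_le_inf_right _ (Finset.inf_mono_fun fun p _ => h p)
  · rw [if_neg hh, if_neg hh]

/-- Uniqueness of stable partial models under a stratification rank. -/
lemma stable_unique {P : Program A} (ρ : A → ℕ)
    (hpos : ∀ u v, posArc P u v → ρ u ≤ ρ v)
    (hneg : ∀ u v, negArc P u v → ρ u < ρ v)
    {I I' : A → TV3} (hI : IsStablePartial P I) (hI' : IsStablePartial P I') : I = I' := by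
  classical
  have main : ∀ k, ∀ I I' : A → TV3, IsStablePartial P I → IsStablePartial P I' →
      ∀ a, ρ a < k → I a = I' a := by
    intro k
    induction k with
    | zero => intro I I' _ _ a ha; omega
    | succ k ih =>
      have le1 : ∀ I I' : A → TV3, IsStablePartial P I → IsStablePartial P I' →
          (∀ a, ρ a < k → I a = I' a) → ∀ a, ρ a < k + 1 → I a ≤ I' a := by
        intro I I' hI hI' hEq a ha
        set K : A → TV3 := fun b => if ρ b ≤ k then I' b else ⊤ with hK
        have hpre : ∀ b, Phi P I K b ≤ K b := by
          intro b
          by_cases hb : ρ b ≤ k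
          · rw [show K b = I' b from if_pos hb]
            simp only [Phi]
            refine Finset.sup_le ?_
            intro r hr
            by_cases hh : r.head = b
            · rw [if_pos hh]
              have hterm : r.pos.inf K ⊓ r.neg.inf (fun q => TV3.neg (I q))
                  = r.pos.inf I' ⊓ r.neg.inf (fun q => TV3.neg (I' q)) := by
                congr 1
                · refine Finset.inf_congr rfl ?_
                  intro p hp
                  have h1 : ρ p ≤ ρ b := hpos p b ⟨r, hr, hh, hp⟩
                  exact if_pos (le_trans h1 hb)
                · refine Finset.inf_congr rfl ?_
                  intro q hq
                  have h1 : ρ q < ρ b := hneg q b ⟨r, hr, hh, hq⟩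
                  rw [hEq q (by omega)]
              rw [hterm]
              have h2 : (if r.head = b then r.pos.inf I' ⊓ r.neg.inf (fun q => TV3.neg (I' q))
                  else TV3.fls) ≤ Phi P I' I' b :=
                Finset.le_sup (f := fun r => if r.head = b then
                  r.pos.inf I' ⊓ r.neg.inf (fun q => TV3.neg (I' q)) else TV3.fls) hr
              rw [if_pos hh] at h2
              exact le_trans h2 (hI'.1 b)
            · rw [if_neg hh]; exact bot_le
          · rw [show K b = ⊤ from if_neg hb]; exact le_top
        have h3 := hI.2 K hpre a
        rwa [show K a = I' a from if_pos (by omega)] at h3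
      intro I I' hI hI' a ha
      exact le_antisymm (le1 I I' hI hI' (ih I I' hI hI') a ha)
        (le1 I' I hI' hI (fun b hb => (ih I I' hI hI' b hb).symm) a ha)
  funext a
  exact main (ρ a + 1) I I' hI hI' a (by omega)

/-- Every stable partial model is 2-valued under a stratification rank. -/
lemma stable_2valued {P : Program A} (ρ : A → ℕ)
    (hpos : ∀ u v, posArc P u v → ρ u ≤ ρ v)
    (hneg : ∀ u v, negArc P u v → ρ u < ρ v)
    {I : A → TV3} (hI : IsStablePartial P I) : Is2Valued I := by
  classical
  have main : ∀ k a, ρ a < k → I a ≠ TV3.unk := by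
    intro k
    induction k with
    | zero => intro a ha; omega
    | succ k ih =>
      intro a ha
      set K : A → TV3 := fun b => if ρ b ≤ k ∧ I b = TV3.unk then ⊥ else I b with hK
      have hKle : ∀ b, K b ≤ I b := by
        intro b
        by_cases hb : ρ b ≤ k ∧ I b = TV3.unk
        · rw [show K b = ⊥ from if_pos hb]; exact bot_le
        · rw [show K b = I b from if_neg hb]
      have hpre : ∀ b, Phi P I K b ≤ K b := by
        intro b
        by_cases hb : ρ b ≤ k ∧ I b = TV3.unk
        · rw [show K b = ⊥ from if_pos hb]
          simp only [Phi]
          refine Finset.sup_le ?_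
          intro r hr
          by_cases hh : r.head = b
          · rw [if_pos hh]
            by_contra hcon
            have hbody : TV3.unk ≤ r.pos.inf K ⊓ r.neg.inf (fun q => TV3.neg (I q)) := by
              rcases TV3.bot_or_unk_le (r.pos.inf K ⊓ r.neg.inf (fun q => TV3.neg (I q))) with
                h1 | h1
              · exact absurd (le_of_eq h1) hcon
              · exact h1
            have hposs : ∀ p ∈ r.pos, I p = TV3.tru := by
              intro p hp
              have h1 : TV3.unk ≤ K p :=
                Finset.le_inf_iff.mp (le_trans hbody inf_le_left) p hp
              have hple : ρ p ≤ ρ b := hpos p b ⟨r, hr, hh, hp⟩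
              by_cases hc : ρ p ≤ k ∧ I p = TV3.unk
              · rw [show K p = ⊥ from if_pos hc] at h1
                exact absurd h1 (by decide)
              · rw [show K p = I p from if_neg hc] at h1
                cases hIp : I p with
                | fls => rw [hIp] at h1; exact absurd h1 (by decide)
                | unk => exact absurd ⟨le_trans hple hb.1, hIp⟩ hc
                | tru => rfl
            have hnegs : ∀ q ∈ r.neg, TV3.neg (I q) = TV3.tru := by
              intro q hq
              have h1 : TV3.unk ≤ TV3.neg (I q) :=
                Finset.le_inf_iff.mp (le_trans hbody inf_le_right) q hq
              have hqlt : ρ q < ρ b := hneg q b ⟨r, hr, hh, hq⟩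
              have h2 : I q ≠ TV3.unk := ih q (by omega)
              cases hIq : I q with
              | fls => rfl
              | unk => exact absurd hIq h2
              | tru => rw [hIq] at h1; exact absurd h1 (by decide)
            have htru : TV3.tru ≤ Phi P I I b := by
              have h2 : (if r.head = b then r.pos.inf I ⊓ r.neg.inf (fun q => TV3.neg (I q))
                  else TV3.fls) ≤ Phi P I I b :=
                Finset.le_sup (f := fun r => if r.head = b then
                  r.pos.inf I ⊓ r.neg.inf (fun q => TV3.neg (I q)) else TV3.fls) hr
              rw [if_pos hh] at h2
              refine le_trans (le_inf ?_ ?_) h2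
              · refine Finset.le_inf ?_
                intro p hp
                exact le_of_eq (hposs p hp).symm
              · refine Finset.le_inf ?_
                intro q hq
                exact le_of_eq (hnegs q hq).symm
            have h4 := le_trans htru (hI.1 b)
            rw [hb.2] at h4
            exact absurd h4 (by decide)
          · rw [if_neg hh]; exact bot_le
        · rw [show K b = I b from if_neg hb]
          exact le_trans (Phi_mono hKle b) (hI.1 b)
      have h5 := hI.2 K hpre a
      intro hunk
      rw [show K a = ⊥ from if_pos ⟨by omega, hunk⟩, hunk] at h5
      exact absurd h5 (by decide)
  intro a
  exact main (ρ a + 1) a (by omega)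

end Sem
section Exist
variable {A : Type*} [Fintype A] [DecidableEq A]

/-- The stratum-k operator with fixed lower-strata values `low`. -/
def Fop (P : Program A) (ρ : A → ℕ) (k : ℕ) (low : Set A) : Set A →o Set A where
  toFun X := {a | ρ a = k ∧ ∃ r ∈ P, r.head = a ∧
      (∀ p ∈ r.pos, (ρ p = k ∧ p ∈ X) ∨ (ρ p < k ∧ p ∈ low)) ∧ ∀ q ∈ r.neg, q ∉ low}
  monotone' := by
    rintro X Y hXY a ⟨hρ, r, hr, hh, hp, hq⟩
    exact ⟨hρ, r, hr, hh, fun p hp' =>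
      (hp p hp').imp (fun h => ⟨h.1, hXY h.2⟩) id, hq⟩

/-- The true atoms of each stratum, by strong recursion on the stratum. -/
noncomputable def Dset (P : Program A) (ρ : A → ℕ) (k : ℕ) : Set A :=
  OrderHom.lfp (Fop P ρ k {b | ∃ _ : ρ b < k, b ∈ Dset P ρ (ρ b)})
termination_by k
decreasing_by assumption

def lowD (P : Program A) (ρ : A → ℕ) (k : ℕ) : Set A :=
  {b | ∃ _ : ρ b < k, b ∈ Dset P ρ (ρ b)}

lemma Dset_eq (P : Program A) (ρ : A → ℕ) (k : ℕ) :
    Dset P ρ k = OrderHom.lfp (Fop P ρ k (lowD P ρ k)) := by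
  rw [Dset]; rfl

lemma Dset_rank {P : Program A} {ρ : A → ℕ} {k : ℕ} {a : A} (ha : a ∈ Dset P ρ k) :
    ρ a = k := by
  have h : Dset P ρ k ≤ {a | ρ a = k} := by
    rw [Dset_eq]
    exact OrderHom.lfp_le _ (fun a ha => ha.1)
  exact h ha

lemma Dset_closed {P : Program A} {ρ : A → ℕ} {k : ℕ} {a : A}
    (ha : a ∈ Fop P ρ k (lowD P ρ k) (Dset P ρ k)) : a ∈ Dset P ρ k := by
  rw [Dset_eq] at ha ⊢
  rw [← OrderHom.map_lfp (Fop P ρ k (lowD P ρ k))]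
  exact ha

open Classical in
/-- The perfect model of a stratified program. -/
noncomputable def Imod (P : Program A) (ρ : A → ℕ) : A → TV3 := fun a =>
  if a ∈ Dset P ρ (ρ a) then TV3.tru else TV3.fls

lemma Imod_stable {P : Program A} (ρ : A → ℕ)
    (hpos : ∀ u v, posArc P u v → ρ u ≤ ρ v)
    (hneg : ∀ u v, negArc P u v → ρ u < ρ v) :
    IsStablePartial P (Imod P ρ) := by
  classical
  set I : A → TV3 := Imod P ρ with hIdef
  have hIval : ∀ a, (a ∈ Dset P ρ (ρ a) → I a = TV3.tru) ∧
      (a ∉ Dset P ρ (ρ a) → I a = TV3.fls) := by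
    intro a
    constructor <;> intro h <;> simp only [hIdef, Imod] <;>
      first
        | exact if_pos h
        | exact if_neg h
  constructor
  · intro a
    simp only [Phi]
    refine Finset.sup_le ?_
    intro r hr
    by_cases hh : r.head = a
    · rw [if_pos hh]
      rcases TV3.bot_or_unk_le (r.pos.inf I ⊓ r.neg.inf (fun q => TV3.neg (I q))) with h1 | h1
      · rw [h1]; exact bot_le
      · have hposs : ∀ p ∈ r.pos, p ∈ Dset P ρ (ρ p) := by
          intro p hp
          have h2 : TV3.unk ≤ I p :=
            Finset.le_inf_iff.mp (le_trans h1 inf_le_left) p hp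
          by_contra hmem
          rw [(hIval p).2 hmem] at h2
          exact absurd h2 (by decide)
        have hnegs : ∀ q ∈ r.neg, q ∉ Dset P ρ (ρ q) := by
          intro q hq hmem
          have h2 : TV3.unk ≤ TV3.neg (I q) :=
            Finset.le_inf_iff.mp (le_trans h1 inf_le_right) q hq
          rw [(hIval q).1 hmem] at h2
          exact absurd h2 (by decide)
        have hmem : a ∈ Dset P ρ (ρ a) := by
          refine Dset_closed ⟨rfl, r, hr, hh, ?_, ?_⟩
          · intro p hp
            have hple : ρ p ≤ ρ a := hpos p a ⟨r, hr, hh, hp⟩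
            rcases lt_or_eq_of_le hple with hlt | heq
            · exact Or.inr ⟨hlt, ⟨hlt, hposs p hp⟩⟩
            · refine Or.inl ⟨heq, ?_⟩
              rw [← heq]
              exact hposs p hp
          · rintro q hq ⟨hlt, hmem⟩
            exact hnegs q hq hmem
        rw [(hIval a).1 hmem]
        exact le_top
    · rw [if_neg hh]; exact bot_le
  · intro K hK a
    by_cases hmem : a ∈ Dset P ρ (ρ a)
    · rw [(hIval a).1 hmem]
      have main : ∀ k, ∀ b ∈ Dset P ρ k, TV3.tru ≤ K b := by
        intro k
        induction k using Nat.strong_induction_on with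
        | _ k ih =>
          have hstep : Dset P ρ k ≤ {b | TV3.tru ≤ K b} := by
            rw [Dset_eq]
            refine OrderHom.lfp_le _ ?_
            rintro b ⟨hρ, r, hr, hh, hp, hq⟩
            show TV3.tru ≤ K b
            have htru : TV3.tru ≤ Phi P I K b := by
              have h2 : (if r.head = b then r.pos.inf K ⊓ r.neg.inf (fun q => TV3.neg (I q))
                  else TV3.fls) ≤ Phi P I K b :=
                Finset.le_sup (f := fun r => if r.head = b then
                  r.pos.inf K ⊓ r.neg.inf (fun q => TV3.neg (I q)) else TV3.fls) hr
              rw [if_pos hh] at h2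
              refine le_trans (le_inf ?_ ?_) h2
              · refine Finset.le_inf ?_
                intro p hp'
                rcases hp p hp' with ⟨h3, h4⟩ | ⟨h3, h4⟩
                · exact h4
                · obtain ⟨h5, h6⟩ := h4
                  exact ih (ρ p) h5 p h6
              · refine Finset.le_inf ?_
                intro q hq'
                have hqlt : ρ q < k := by
                  have := hneg q b ⟨r, hr, hh, hq'⟩
                  omega
                have hqmem : q ∉ Dset P ρ (ρ q) := by
                  intro hc
                  exact hq q hq' ⟨hqlt, hc⟩
                rw [(hIval q).2 hqmem]
                decide
            exact le_trans htru (hK b)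
          exact hstep
      exact main (ρ a) a hmem
    · rw [(hIval a).2 hmem]
      exact bot_le

end Exist
/-- a locally stratified finite ground program has a unique
regular model, which is 2-valued and is the unique stable model. -/
theorem stmt12 {A : Type*} [Fintype A] [DecidableEq A] (P : Program A)
    (h : LocallyStratified P) :
    ∃ I : A → TV3, IsRegularModel P I ∧ (∀ I', IsRegularModel P I' → I' = I) ∧
      Is2Valued I ∧ IsStablePartial P I ∧
      ∀ I', IsStablePartial P I' → Is2Valued I' → I' = I := by
  have hpos : ∀ u v, posArc P u v → rk P u ≤ rk P v := fun u v huv => rk_pos_le huv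
  have hneg : ∀ u v, negArc P u v → rk P u < rk P v := fun u v huv => rk_neg_lt h huv
  set I : A → TV3 := Imod P (rk P) with hI
  have hstable : IsStablePartial P I := Imod_stable (rk P) hpos hneg
  have huniq : ∀ I' : A → TV3, IsStablePartial P I' → I' = I := fun I' hI' =>
    stable_unique (rk P) hpos hneg hI' hstable
  refine ⟨I, ⟨hstable, fun I' hI' _ => huniq I' hI'⟩, ?_, ?_, hstable, ?_⟩
  · intro I' hI'
    exact huniq I' hI'.1
  · exact stable_2valued (rk P) hpos hneg hstable
  · intro I' hI' _
    exact huniq I' hI'
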